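/- With the construction below, for every n ∈ S and every 1 ≤ i ≤ a_n, the restriction of the projection θ_{n,i} : A → M_n(F) to the subalgebra B is a surjective F-algebra homomorphism B → M_n(F). Consequently F^n, with B acting through θ_{n,i}, is a simple B-module of F-dimension n. -/

import Mathlib

open Matrix

/-- The `n×n` cyclic permutation matrix: identity block `I_{n-1}` in the upper right and
a `1` in the lower-left corner. -/
def cycMat (F : Type*) [Semiring F] (n : ℕ) : Matrix (Fin n) (Fin n) F :=
  Matrix.of fun k l => if (l : ℕ) = ((k : ℕ) + 1) % n then 1 else 0

/-- The matrix unit `E₁₁`, with `1` in the upper-left entry and zeros elsewhere. -/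
def e11 (F : Type*) [Semiring F] (n : ℕ) : Matrix (Fin n) (Fin n) F :=
  Matrix.of fun k l => if (k : ℕ) = 0 ∧ (l : ℕ) = 0 then 1 else 0

/-- Index set: pairs `(n, i)` with `n ≥ 2` and `1 ≤ i ≤ a n` (here `0`-indexed: `i < a n`).
Note that `n` lies in the support `S` of `a` automatically, since `i < a n` forces `a n ≠ 0`. -/
abbrev Idx (a : ℕ → ℕ) : Type := {p : ℕ × ℕ // 2 ≤ p.1 ∧ p.2 < a p.1}

/-- The ambient algebra `A = ∏_{n ∈ S} ∏_{i=1}^{a n} M_n(F)`. -/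
abbrev ConstrA (F : Type*) [Field F] (a : ℕ → ℕ) : Type _ :=
  ∀ p : Idx a, Matrix (Fin p.1.1) (Fin p.1.1) F

/-- The element `e` whose `(n,i)` component is `λ_{n,i} • E₁₁`. -/
def elemE {F : Type*} [Field F] (a : ℕ → ℕ) (lam : Idx a → F) : ConstrA F a :=
  fun p => lam p • e11 F p.1.1

/-- The element `σ` whose `(n,i)` component is the cyclic permutation matrix `P_n`. -/
def elemS (F : Type*) [Field F] (a : ℕ → ℕ) : ConstrA F a :=
  fun p => cycMat F p.1.1
/-- `B = F⟨e, σ⟩`, the unital `F`-subalgebra of `A` generated by `e` and `σ`. -/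
abbrev ConstrB (F : Type*) [Field F] (a : ℕ → ℕ) (lam : Idx a → F) :
    Subalgebra F (ConstrA F a) :=
  Algebra.adjoin F {elemE a lam, elemS F a}

set_option maxHeartbeats 1000000
set_option synthInstance.maxHeartbeats 400000

/-- The `B`-module structure on `Fⁿ` (for the component `p = (n,i)`) in which `B` acts
through the projection `θ_{n,i} : A → M_n(F)`, i.e. `b • v = θ_{n,i}(b) ⬝ v`. -/
noncomputable def reprMod (F : Type*) [Field F] (a : ℕ → ℕ) (lam : Idx a → F) (p : Idx a) :
    Module ↥(ConstrB F a lam) (Fin p.1.1 → F) :=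
  Module.compHom (Fin p.1.1 → F)
    ((Matrix.toLinAlgEquiv' :
        Matrix (Fin p.1.1) (Fin p.1.1) F ≃ₐ[F] Module.End F (Fin p.1.1 → F)).toAlgHom.toRingHom.comp
      (((Pi.evalAlgHom F (fun q : Idx a => Matrix (Fin q.1.1) (Fin q.1.1) F) p).comp
        (ConstrB F a lam).val).toRingHom))

section Aux

open Matrix
open Fin.NatCast

variable (F : Type*) [Field F]

theorem e11_eq_std (n : ℕ) [NeZero n] : e11 F n = Matrix.single (0 : Fin n) 0 1 := by
  ext x l
  simp only [e11, Matrix.single, of_apply]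
  congr 1
  rw [Fin.ext_iff, Fin.ext_iff, Fin.val_zero, @eq_comm _ 0 (x : ℕ), @eq_comm _ 0 (l : ℕ)]

theorem cycMat_eq_sum (n : ℕ) [NeZero n] (hn : 2 ≤ n) :
    cycMat F n = ∑ k : Fin n, Matrix.single k (k + 1) (1 : F) := by
  have h1 : ((1 : Fin n) : ℕ) = 1 := by
    rw [← Nat.cast_one, Fin.val_cast_of_lt (by omega)]
  ext x l
  rw [Matrix.sum_apply]
  rw [Finset.sum_eq_single x (fun k _ hk => by
      simp only [Matrix.single, of_apply]
      exact if_neg (fun h => hk h.1)) (fun h => absurd (Finset.mem_univ x) h)]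
  have hiff : ((l : ℕ) = ((x : ℕ) + 1) % n) ↔ (x + 1 = l) := by
    rw [Fin.ext_iff, Fin.val_add, h1, eq_comm]
  simp only [cycMat, Matrix.single, of_apply, hiff, true_and]

theorem std_mul_cycMat (n : ℕ) [NeZero n] (hn : 2 ≤ n) (j m : Fin n) :
    Matrix.single j m (1 : F) * cycMat F n = Matrix.single j (m + 1) 1 := by
  rw [cycMat_eq_sum F n hn, Finset.mul_sum,
    Finset.sum_eq_single m (fun k _ hk => single_mul_single_of_ne _ _ _ _ (Ne.symm hk) _)
      (fun h => absurd (Finset.mem_univ m) h), single_mul_single_same, one_mul]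

theorem cycMat_mul_std (n : ℕ) [NeZero n] (hn : 2 ≤ n) (j m : Fin n) :
    cycMat F n * Matrix.single j m (1 : F) = Matrix.single (j - 1) m 1 := by
  rw [cycMat_eq_sum F n hn, Finset.sum_mul,
    Finset.sum_eq_single (j - 1) (fun k _ hk => single_mul_single_of_ne _ _ _ _
      (fun h => hk (eq_sub_iff_add_eq.mpr h)) _)
      (fun h => absurd (Finset.mem_univ _) h), sub_add_cancel, single_mul_single_same, one_mul]

theorem adjoin_pair_eq_top (n : ℕ) (hn : 2 ≤ n) (c : F) (hc : c ≠ 0) :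
    Algebra.adjoin F {c • e11 F n, cycMat F n} = ⊤ := by
  haveI : NeZero n := ⟨by omega⟩
  set S := Algebra.adjoin F {c • e11 F n, cycMat F n} with hS
  have hP : cycMat F n ∈ S := Algebra.subset_adjoin (by simp)
  have hE : e11 F n ∈ S := by
    have h0 : c • e11 F n ∈ S := Algebra.subset_adjoin (by simp)
    have h2 := S.smul_mem h0 c⁻¹
    rwa [smul_smul, inv_mul_cancel₀ hc, one_smul] at h2
  have hstd : ∀ j m : Fin n, Matrix.single j m (1 : F) ∈ S := by
    have hcol : ∀ k : ℕ, Matrix.single (0 : Fin n) ((k : Fin n)) (1 : F) ∈ S := by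
      intro k
      induction k with
      | zero => rw [Nat.cast_zero, ← e11_eq_std]; exact hE
      | succ k ih =>
        have h := S.mul_mem ih hP
        rw [std_mul_cycMat F n hn] at h
        rwa [show ((k + 1 : ℕ) : Fin n) = (k : Fin n) + 1 by push_cast; ring]
    have hcol' : ∀ m : Fin n, Matrix.single (0 : Fin n) m (1 : F) ∈ S := fun m => by
      have := hcol m.val; rwa [Fin.cast_val_eq_self] at this
    have hrow : ∀ (k : ℕ) (m : Fin n), Matrix.single (-(k : Fin n)) m (1 : F) ∈ S := by
      intro k
      induction k with
      | zero => intro m; rw [Nat.cast_zero, neg_zero]; exact hcol' m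
      | succ k ih =>
        intro m
        have h := S.mul_mem hP (ih m)
        rw [cycMat_mul_std F n hn] at h
        rwa [show (-((k + 1 : ℕ) : Fin n)) = -(k : Fin n) - 1 by push_cast; abel]
    intro j m
    have := hrow ((-j).val) m
    rwa [Fin.cast_val_eq_self, neg_neg] at this
  rw [eq_top_iff]
  intro M _
  rw [Matrix.matrix_eq_sum_single M]
  refine S.sum_mem fun i _ => S.sum_mem fun j _ => ?_
  have hM : Matrix.single i j (M i j) = M i j • Matrix.single i j (1 : F) := by
    rw [Matrix.smul_single, smul_eq_mul, mul_one]
  rw [hM]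
  exact S.smul_mem (hstd i j) _

end Aux

/-- The restriction of the projection `θ_{n,i} : A → M_n(F)` to `B` is a surjective
`F`-algebra homomorphism; consequently `Fⁿ`, with `B` acting through `θ_{n,i}`, is a
simple `B`-module of `F`-dimension `n`. -/
theorem stmt_12 (F : Type*) [Field F] [IsAlgClosed F] (a : ℕ → ℕ) (lam : Idx a → F)
    (hlam_ne : ∀ p, lam p ≠ 0)
    (hlam : ∀ p q : Idx a, p.1.1 = q.1.1 → p ≠ q → lam p ≠ lam q ∧ lam p ≠ -lam q)
    (p : Idx a) :
    Function.Surjective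
      ((Pi.evalAlgHom F (fun q : Idx a => Matrix (Fin q.1.1) (Fin q.1.1) F) p).comp
        (ConstrB F a lam).val) ∧
    (letI := reprMod F a lam p
     IsSimpleModule ↥(ConstrB F a lam) (Fin p.1.1 → F)) ∧
    Module.finrank F (Fin p.1.1 → F) = p.1.1 := by
  obtain ⟨hn2, hia⟩ := p.2
  haveI : NeZero p.1.1 := ⟨by omega⟩
  have hsurj : Function.Surjective
      ((Pi.evalAlgHom F (fun q : Idx a => Matrix (Fin q.1.1) (Fin q.1.1) F) p).comp
        (ConstrB F a lam).val) := by
    rw [← AlgHom.range_eq_top, AlgHom.range_comp, Subalgebra.range_val]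
    show Subalgebra.map _ (Algebra.adjoin F {elemE a lam, elemS F a}) = ⊤
    rw [AlgHom.map_adjoin, Set.image_insert_eq, Set.image_singleton]
    have h1 : (Pi.evalAlgHom F (fun q : Idx a => Matrix (Fin q.1.1) (Fin q.1.1) F) p)
        (elemE a lam) = lam p • e11 F p.1.1 := rfl
    have h2 : (Pi.evalAlgHom F (fun q : Idx a => Matrix (Fin q.1.1) (Fin q.1.1) F) p)
        (elemS F a) = cycMat F p.1.1 := rfl
    rw [h1, h2]
    exact adjoin_pair_eq_top F p.1.1 hn2 (lam p) (hlam_ne p)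
  refine ⟨hsurj, ?_, Module.finrank_fin_fun F⟩
  letI := reprMod F a lam p
  haveI : Nontrivial (Fin p.1.1 → F) :=
    ⟨fun _ => 0, fun _ => 1, fun h => zero_ne_one (congrFun h ⟨0, by omega⟩)⟩
  refine IsSimpleModule.mk (toIsSimpleOrder := { eq_bot_or_eq_top := fun N => ?_ })
  rcases eq_or_ne N ⊥ with h | h
  · exact Or.inl h
  · refine Or.inr (Submodule.eq_top_iff'.mpr fun w => ?_)
    obtain ⟨v, hvN, hv0⟩ := N.ne_bot_iff.mp h
    obtain ⟨i, hi⟩ : ∃ i, v i ≠ 0 := by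
      by_contra hA; push_neg at hA; exact hv0 (funext hA)
    obtain ⟨b, hb⟩ := hsurj (Matrix.of fun k l => if l = i then w k * (v i)⁻¹ else 0)
    have hbv : b • v = w := by
      show Matrix.toLinAlgEquiv'
        (((Pi.evalAlgHom F (fun q : Idx a => Matrix (Fin q.1.1) (Fin q.1.1) F) p).comp
          (ConstrB F a lam).val) b) v = w
      rw [hb, Matrix.toLinAlgEquiv'_apply]
      funext j
      show (∑ l, (Matrix.of fun k l => if l = i then w k * (v i)⁻¹ else 0) j l * v l) = w j
      simp only [Matrix.of_apply, ite_mul, zero_mul, Finset.sum_ite_eq', Finset.mem_univ,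
        if_true]
      rw [mul_assoc, inv_mul_cancel₀ hi, mul_one]
    exact hbv ▸ N.smul_mem b hvN
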